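/- Let $G$ be a connected non-bipartite graph containing an induced odd cycle $G_0$ and a vertex $v_0$ not in $G_0$ and not adjacent to any vertex of $G_0$. Then for every minimal vertex cover $C$ of $G$, the prime ideal $Q = (t, \{x_it\}_{i\ne v_0}, \{x_ix_jt\}_{i\in N_G(v_0), j\in N_G(i)\setminus\{v_0\}})$ of $R_G$ contains a minimal prime $P$ of $(t)$ which is distinct from all the ideals $P_C = (x_Ft : F \text{ a face of } G, F\subseteq C)$ and distinct from $(t,x_1t,\dots,x_nt)$. -/

import Mathlib

open MvPolynomial

set_option synthInstance.maxHeartbeats 1000000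

noncomputable section

/-- The ambient polynomial ring `K[x_i : i ∈ V][t]`, with the variable `none` playing
the role of `t`. -/
abbrev Amb (K V : Type*) [CommSemiring K] := MvPolynomial (Option V) K

variable (K : Type*) [Field K] {V : Type*} [DecidableEq V]

/-- The generator `t`. -/
def tGen : Amb K V := X none

/-- The generator `x_i t`. -/
def vGen (i : V) : Amb K V := X (some i) * X none

/-- The generator `x_i x_j t`. -/
def eGen (i j : V) : Amb K V := X (some i) * X (some j) * X none

variable (G : SimpleGraph V)

/-- The toric ring `R_G = K[t, {x_i t}, {x_i x_j t : {i,j} ∈ E(G)}]` of the graph `G`. -/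
def RG : Subalgebra K (Amb K V) :=
  Algebra.adjoin K
    ({tGen K} ∪ Set.range (vGen K (V := V)) ∪ {p | ∃ i j, G.Adj i j ∧ p = eGen K i j})

/-- The faces of the one-dimensional simplicial complex attached to `G`. -/
def IsFace (F : Finset V) : Prop :=
  F = ∅ ∨ (∃ i, F = {i}) ∨ ∃ i j, G.Adj i j ∧ F = {i, j}

/-- The monomial `x_F t`. -/
def faceMon (F : Finset V) : Amb K V := (∏ i ∈ F, X (some i)) * X none

/-- The ideal `P_0 = (t, x_1 t, …, x_n t)` of `R_G`. -/
def P0 : Ideal (RG K G) :=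
  Ideal.span {u : RG K G | ((u : Amb K V) = tGen K) ∨ ∃ i, (u : Amb K V) = vGen K i}

/-- The principal ideal `(t)` of `R_G`. -/
def tIdeal : Ideal (RG K G) := Ideal.span {u : RG K G | (u : Amb K V) = tGen K}

/-- The ideal `P_C` generated by the monomials `x_F t` for faces `F ⊆ C`. -/
def PC (C : Finset V) : Ideal (RG K G) :=
  Ideal.span {u : RG K G | ∃ F : Finset V, IsFace G F ∧ F ⊆ C ∧ (u : Amb K V) = faceMon K F}

/-- The ideal `Q_i` generated by the monomials `x_F t` for faces `F ∋ i`. -/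
def Qi (i : V) : Ideal (RG K G) :=
  Ideal.span {u : RG K G | ∃ F : Finset V, IsFace G F ∧ i ∈ F ∧ (u : Amb K V) = faceMon K F}

/-- A vertex cover of `G`. -/
def IsVertexCover (C : Finset V) : Prop := ∀ ⦃i j⦄, G.Adj i j → i ∈ C ∨ j ∈ C

/-- A minimal vertex cover of `G`. -/
def IsMinVertexCover (C : Finset V) : Prop :=
  IsVertexCover G C ∧ ∀ C' ⊆ C, IsVertexCover G C' → C' = C

/-- An induced odd cycle of `G`, given by an injective cyclic enumeration of its
vertices such that adjacency holds exactly between consecutive vertices. -/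
def IsInducedOddCycle {V : Type*} (G : SimpleGraph V) (m : ℕ) (c : ZMod m → V) : Prop :=
  3 ≤ m ∧ Odd m ∧ Function.Injective c ∧
    ∀ p q : ZMod m, G.Adj (c p) (c q) ↔ (q = p + 1 ∨ p = q + 1)

/-- The monomial `x^a t^b` of the ambient ring. -/
def monom [Fintype V] (a : V → ℕ) (b : ℕ) : Amb K V :=
  (∏ i, X (some i) ^ a i) * X none ^ b

/-- An element of `R_G` which is a monomial. -/
def IsMonomialElt [Fintype V] (u : RG K G) : Prop :=
  ∃ (a : V → ℕ) (b : ℕ), (u : Amb K V) = monom K a b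

/-- A monomial ideal of `R_G`. -/
def IsMonomialIdeal [Fintype V] (I : Ideal (RG K G)) : Prop :=
  ∃ S : Set (RG K G), (∀ u ∈ S, IsMonomialElt K G u) ∧ I = Ideal.span S

/-- A height one ideal of the domain `R_G`: a nonzero prime all of whose properly
contained primes are zero. -/
def HeightOne (I : Ideal (RG K G)) : Prop :=
  I.IsPrime ∧ I ≠ ⊥ ∧ ∀ J : Ideal (RG K G), J.IsPrime → J < I → J = ⊥

/-- The ideal contains the element `t`. -/
def ContainsT (I : Ideal (RG K G)) : Prop := ∃ u ∈ I, (u : Amb K V) = tGen K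

/-- The canonical ideal of `R_G` (for `R_G` normal): the intersection of all height one
monomial prime ideals. -/
def canonicalIdeal [Fintype V] : Ideal (RG K G) :=
  sInf {P : Ideal (RG K G) | HeightOne K G P ∧ IsMonomialIdeal K G P}

/-- `R_G` is Gorenstein: the canonical ideal (= canonical module) is isomorphic to
`R_G` as an `R_G`-module, equivalently it is a principal ideal, i.e. the canonical
class vanishes. -/
def IsGorensteinToric [Fintype V] : Prop :=
  (canonicalIdeal K G).IsPrincipal

/-- The ideal `Q = (t, {x_i t}_{i ≠ v₀}, {x_i x_j t}_{i ∈ N(v₀), j ∈ N(i) \ {v₀}})`. -/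
def Q8 {n : ℕ} (G : SimpleGraph (Fin n)) (v₀ : Fin n) : Ideal (RG K G) :=
  Ideal.span {u : RG K G |
    (u : Amb K (Fin n)) = tGen K ∨
    (∃ i, i ≠ v₀ ∧ (u : Amb K (Fin n)) = vGen K i) ∨
    ∃ i j, G.Adj v₀ i ∧ G.Adj i j ∧ j ≠ v₀ ∧ (u : Amb K (Fin n)) = eGen K i j}

namespace Stmt8Aux

open Finsupp

variable (K : Type*) [Field K] {n : ℕ}

open Classical in
/-- The weight function. -/
noncomputable def wf (G : SimpleGraph (Fin n)) (v₀ : Fin n) : Option (Fin n) → ℤ :=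
  fun o => o.elim 2 fun i => if i = v₀ then -2 else if G.Adj v₀ i then 0 else -1

variable (G : SimpleGraph (Fin n)) (v₀ : Fin n)

lemma wf_none : wf G v₀ none = 2 := rfl

lemma wf_self : wf G v₀ (some v₀) = -2 := by simp [wf]

lemma wf_adj {i : Fin n} (h : G.Adj v₀ i) : wf G v₀ (some i) = 0 := by
  simp [wf, h, h.ne']

lemma wf_nonadj {i : Fin n} (h1 : i ≠ v₀) (h2 : ¬ G.Adj v₀ i) : wf G v₀ (some i) = -1 := by
  simp [wf, h1, h2]

lemma wf_lb {i : Fin n} (h1 : i ≠ v₀) : -1 ≤ wf G v₀ (some i) := by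
  by_cases h : G.Adj v₀ i
  · rw [wf_adj G v₀ h]; norm_num
  · rw [wf_nonadj G v₀ h1 h]

lemma w_single (o : Option (Fin n)) (k : ℕ) :
    weight (wf G v₀) (Finsupp.single o k) = (k : ℤ) * wf G v₀ o := by
  rw [weight_apply, Finsupp.sum_single_index] <;> simp

lemma tGen_eq : tGen K = monomial (Finsupp.single (none : Option (Fin n)) 1) (1 : K) := rfl

lemma vGen_eq (i : Fin n) :
    vGen K i = monomial (Finsupp.single (some i) 1 + Finsupp.single (none : Option (Fin n)) 1)
      (1 : K) := by
  rw [vGen, X, X, monomial_mul, one_mul]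

lemma eGen_eq (i j : Fin n) :
    eGen K i j = monomial (Finsupp.single (some i) 1 + Finsupp.single (some j) 1 +
      Finsupp.single (none : Option (Fin n)) 1) (1 : K) := by
  rw [eGen, X, X, X, monomial_mul, monomial_mul, one_mul, one_mul]

/-- The generating set of `RG`. -/
def gens : Set (Amb K (Fin n)) :=
  {tGen K} ∪ Set.range (vGen K (V := Fin n)) ∪ {p | ∃ i j, G.Adj i j ∧ p = eGen K i j}

lemma RG_eq : RG K G = Algebra.adjoin K (gens K G) := rfl

/-- The ambient version of the generators of `Q8`. -/
def QGen (u : Amb K (Fin n)) : Prop :=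
  u = tGen K ∨ (∃ i, i ≠ v₀ ∧ u = vGen K i) ∨
    ∃ i j, G.Adj v₀ i ∧ G.Adj i j ∧ j ≠ v₀ ∧ u = eGen K i j

lemma mem_Q8_of_QGen {u : RG K G} (h : QGen K G v₀ (u : Amb K (Fin n))) :
    u ∈ Q8 K G v₀ :=
  Ideal.subset_span h

lemma gens_spec {x : Amb K (Fin n)} (hx : x ∈ gens K G) :
    ∃ d, x = monomial d (1 : K) ∧ 0 ≤ weight (wf G v₀) d ∧
      (weight (wf G v₀) d = 0 ∨ QGen K G v₀ x) := by
  rcases hx with (hx | ⟨i, rfl⟩) | ⟨i, j, hij, rfl⟩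
  · rcases hx with rfl
    refine ⟨_, tGen_eq K, ?_, Or.inr (Or.inl rfl)⟩
    rw [w_single, wf_none]; norm_num
  · refine ⟨_, vGen_eq K i, ?_, ?_⟩
    · rw [map_add, w_single, w_single, wf_none]
      by_cases hi : i = v₀
      · rw [hi, wf_self]; norm_num
      · have := wf_lb G v₀ hi; omega
    · by_cases hi : i = v₀
      · left; rw [map_add, w_single, w_single, wf_none, hi, wf_self]; norm_num
      · exact Or.inr (Or.inr (Or.inl ⟨i, hi, rfl⟩))
  · have hw : weight (wf G v₀)
        (Finsupp.single (some i) 1 + Finsupp.single (some j) 1 +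
          Finsupp.single (none : Option (Fin n)) 1)
        = wf G v₀ (some i) + wf G v₀ (some j) + 2 := by
      rw [map_add, map_add, w_single, w_single, w_single, wf_none]; push_cast; ring
    refine ⟨_, eGen_eq K i j, ?_, ?_⟩
    · rw [hw]
      by_cases hi : i = v₀
      · have hvj : G.Adj v₀ j := by rw [← hi]; exact hij
        rw [hi, wf_self, wf_adj G v₀ hvj]; norm_num
      · by_cases hj : j = v₀
        · have hvi : G.Adj v₀ i := by rw [← hj]; exact hij.symm
          rw [hj, wf_self, wf_adj G v₀ hvi]; norm_num
        · have := wf_lb G v₀ hi; have := wf_lb G v₀ hj; omega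
    · by_cases hi : i = v₀
      · have hvj : G.Adj v₀ j := by rw [← hi]; exact hij
        left; rw [hw, hi, wf_self, wf_adj G v₀ hvj]; norm_num
      · by_cases hj : j = v₀
        · have hvi : G.Adj v₀ i := by rw [← hj]; exact hij.symm
          left; rw [hw, hj, wf_self, wf_adj G v₀ hvi]; norm_num
        · by_cases hai : G.Adj v₀ i
          · exact Or.inr (Or.inr (Or.inr ⟨i, j, hai, hij, hj, rfl⟩))
          · by_cases haj : G.Adj v₀ j
            · refine Or.inr (Or.inr (Or.inr ⟨j, i, haj, hij.symm, hi, ?_⟩))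
              rw [eGen, eGen]; ring
            · left
              rw [hw, wf_nonadj G v₀ hi hai, wf_nonadj G v₀ hj haj]; norm_num

lemma closure_spec {x : Amb K (Fin n)} (hx : x ∈ Submonoid.closure (gens K G)) :
    ∃ (hm : x ∈ RG K G) (d : Option (Fin n) →₀ ℕ), x = monomial d (1 : K) ∧
      0 ≤ weight (wf G v₀) d ∧
      (weight (wf G v₀) d = 0 ∨ (⟨x, hm⟩ : RG K G) ∈ Q8 K G v₀) := by
  induction hx using Submonoid.closure_induction with
  | mem x h =>
    obtain ⟨d, hd, h0, h1⟩ := gens_spec K G v₀ h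
    exact ⟨Algebra.subset_adjoin h, d, hd, h0,
      h1.imp id fun hq => mem_Q8_of_QGen K G v₀ hq⟩
  | one =>
    refine ⟨one_mem _, 0, ?_, by simp, Or.inl (by simp)⟩
    rw [monomial_zero', C_1]
  | mul x y hx hy ihx ihy =>
    obtain ⟨hmx, dx, rfl, hx0, hx1⟩ := ihx
    obtain ⟨hmy, dy, rfl, hy0, hy1⟩ := ihy
    refine ⟨mul_mem hmx hmy, dx + dy, by rw [monomial_mul, one_mul], ?_, ?_⟩
    · rw [map_add]; omega
    · rcases hx1 with h0x | hqx
      · rcases hy1 with h0y | hqy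
        · exact Or.inl (by rw [map_add, h0x, h0y, add_zero])
        · exact Or.inr (by have h := Ideal.mul_mem_left (Q8 K G v₀) (⟨_, hmx⟩ : RG K G) hqy; exact h)
      · exact Or.inr (by have h := Ideal.mul_mem_right (⟨_, hmy⟩ : RG K G) (Q8 K G v₀) hqx; exact h)

lemma RG_nonneg {f : Amb K (Fin n)} (hf : f ∈ RG K G) :
    ∀ d ∈ f.support, 0 ≤ weight (wf G v₀) d := by
  induction hf using Algebra.adjoin_induction with
  | mem x h =>
    obtain ⟨d, rfl, h0, -⟩ := gens_spec K G v₀ h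
    intro d' hd'
    classical
    rw [MvPolynomial.support_monomial, if_neg (one_ne_zero : (1 : K) ≠ 0)] at hd'
    rw [Finset.mem_singleton] at hd'
    subst hd'; exact h0
  | algebraMap r =>
    intro d hd
    have hd' : d ∈ (monomial (0 : Option (Fin n) →₀ ℕ) r).support := by
      rwa [show (algebraMap K (Amb K (Fin n)) r) = monomial 0 r by
        rw [MvPolynomial.algebraMap_eq, monomial_zero']] at hd
    have := MvPolynomial.support_monomial_subset hd'
    rw [Finset.mem_singleton] at this
    subst this; simp
  | add x y hx hy ihx ihy =>
    intro d hd
    classical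
    rcases Finset.mem_union.1 (MvPolynomial.support_add hd) with h | h
    exacts [ihx d h, ihy d h]
  | mul x y hx hy ihx ihy =>
    intro d hd
    classical
    obtain ⟨d1, h1, d2, h2, rfl⟩ := Finset.mem_add.1 (MvPolynomial.support_mul x y hd)
    rw [map_add]
    have := ihx d1 h1; have := ihy d2 h2; omega

lemma RG_decomp {f : Amb K (Fin n)} (hf : f ∈ RG K G) :
    ∃ q ∈ Q8 K G v₀, ∀ d ∈ (f - ((q : Amb K (Fin n)))).support,
      weight (wf G v₀) d = 0 := by
  have hf' : f ∈ Submodule.span K (Submonoid.closure (gens K G) : Set (Amb K (Fin n))) := by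
    rw [← Algebra.adjoin_eq_span]; exact hf
  clear hf
  induction hf' using Submodule.span_induction with
  | mem x h =>
    obtain ⟨hm, d, rfl, h0, h1⟩ := closure_spec K G v₀ h
    rcases h1 with h1 | h1
    · refine ⟨0, zero_mem _, fun d' hd' => ?_⟩
      classical
      rw [ZeroMemClass.coe_zero, sub_zero, MvPolynomial.support_monomial,
        if_neg (one_ne_zero : (1 : K) ≠ 0), Finset.mem_singleton] at hd'
      subst hd'; exact h1
    · exact ⟨⟨_, hm⟩, h1, by simp⟩
  | zero => exact ⟨0, zero_mem _, by simp⟩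
  | add x y hx hy ihx ihy =>
    obtain ⟨q1, hq1, h1⟩ := ihx
    obtain ⟨q2, hq2, h2⟩ := ihy
    refine ⟨q1 + q2, add_mem hq1 hq2, fun d hd => ?_⟩
    classical
    have he : x + y - ((q1 + q2 : RG K G) : Amb K (Fin n)) =
        (x - (q1 : Amb K (Fin n))) + (y - (q2 : Amb K (Fin n))) := by
      rw [Subalgebra.coe_add]; ring
    rw [he] at hd
    rcases Finset.mem_union.1 (MvPolynomial.support_add hd) with h | h
    exacts [h1 d h, h2 d h]
  | smul a x hx ihx =>
    obtain ⟨q, hq, h⟩ := ihx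
    refine ⟨algebraMap K (RG K G) a * q, Ideal.mul_mem_left _ _ hq, fun d hd => ?_⟩
    have he : a • x - ((algebraMap K (RG K G) a * q : RG K G) : Amb K (Fin n)) =
        a • (x - (q : Amb K (Fin n))) := by
      simp only [Subalgebra.coe_mul, Subalgebra.coe_algebraMap, Algebra.smul_def]
      ring
    rw [he] at hd
    exact h d (MvPolynomial.support_smul hd)

/-- The ideal of elements all of whose monomials have positive weight. -/
def QId : Ideal (RG K G) where
  carrier := {u | ∀ d ∈ ((u : Amb K (Fin n))).support, 0 < weight (wf G v₀) d}
  zero_mem' := by intro d hd; rw [ZeroMemClass.coe_zero] at hd; simp at hd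
  add_mem' := by
    intro a b ha hb d hd
    classical
    rw [Subalgebra.coe_add] at hd
    rcases Finset.mem_union.1 (MvPolynomial.support_add hd) with h | h
    exacts [ha d h, hb d h]
  smul_mem' := by
    intro r u hu d hd
    classical
    rw [smul_eq_mul, Subalgebra.coe_mul] at hd
    obtain ⟨d1, h1, d2, h2, rfl⟩ := Finset.mem_add.1 (MvPolynomial.support_mul _ _ hd)
    rw [map_add]
    have := RG_nonneg K G v₀ r.2 d1 h1
    have := hu d2 h2
    omega

lemma mem_QId {u : RG K G} :
    u ∈ QId K G v₀ ↔ ∀ d ∈ ((u : Amb K (Fin n))).support, 0 < weight (wf G v₀) d :=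
  Iff.rfl

lemma QGen_pos {u : Amb K (Fin n)} (h : QGen K G v₀ u) :
    ∃ d, u = monomial d (1 : K) ∧ 0 < weight (wf G v₀) d := by
  rcases h with rfl | ⟨i, hi, rfl⟩ | ⟨i, j, hvi, hij, hj, rfl⟩
  · exact ⟨_, tGen_eq K, by rw [w_single, wf_none]; norm_num⟩
  · refine ⟨_, vGen_eq K i, ?_⟩
    rw [map_add, w_single, w_single, wf_none]
    have := wf_lb G v₀ hi; omega
  · refine ⟨_, eGen_eq K i j, ?_⟩
    rw [map_add, map_add, w_single, w_single, w_single, wf_none, wf_adj G v₀ hvi]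
    have := wf_lb G v₀ hj; omega

lemma Q8_le_QId : Q8 K G v₀ ≤ QId K G v₀ := by
  rw [Q8, Ideal.span_le]
  rintro u hu
  obtain ⟨d, hd, hpos⟩ := QGen_pos K G v₀ hu
  intro d' hd'
  classical
  rw [hd, MvPolynomial.support_monomial, if_neg (one_ne_zero : (1 : K) ≠ 0),
    Finset.mem_singleton] at hd'
  subst hd'; exact hpos

lemma QId_le_Q8 : QId K G v₀ ≤ Q8 K G v₀ := by
  intro u hu
  obtain ⟨q, hq, h0⟩ := RG_decomp K G v₀ u.2
  have hsub : ((u : Amb K (Fin n)) - (q : Amb K (Fin n))).support ⊆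
      ((u : Amb K (Fin n))).support ∪ ((q : Amb K (Fin n))).support := by
    classical
    exact MvPolynomial.support_sub (σ := Option (Fin n)) _ _
  have hsupp : ((u : Amb K (Fin n)) - (q : Amb K (Fin n))).support = ∅ := by
    classical
    apply Finset.eq_empty_of_forall_notMem
    intro d hd
    have h1 := h0 d hd
    rcases Finset.mem_union.1 (hsub hd) with h | h
    · exact absurd h1 (by have := hu d h; omega)
    · exact absurd h1 (by have := Q8_le_QId K G v₀ hq d h; omega)
  have : (u : Amb K (Fin n)) = (q : Amb K (Fin n)) := by
    have h2 := MvPolynomial.support_eq_empty.1 hsupp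
    rwa [sub_eq_zero] at h2
  rwa [show u = q from Subtype.ext this]

lemma Q8_eq_QId : Q8 K G v₀ = QId K G v₀ :=
  le_antisymm (Q8_le_QId K G v₀) (QId_le_Q8 K G v₀)

lemma coeff_mul_zero (f g : Amb K (Fin n))
    (hf : ∀ d ∈ f.support, 0 ≤ weight (wf G v₀) d)
    (hg : ∀ d ∈ g.support, 0 ≤ weight (wf G v₀) d)
    {e : Option (Fin n) →₀ ℕ} (he : weight (wf G v₀) e = 0) :
    coeff e (f * g) = coeff e (weightedHomogeneousComponent (wf G v₀) 0 f *
      weightedHomogeneousComponent (wf G v₀) 0 g) := by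
  classical
  rw [MvPolynomial.coeff_mul, MvPolynomial.coeff_mul]
  apply Finset.sum_congr rfl
  intro x hx
  rw [Finset.HasAntidiagonal.mem_antidiagonal] at hx
  have hsum : weight (wf G v₀) x.1 + weight (wf G v₀) x.2 = 0 := by
    rw [← map_add, hx, he]
  rw [coeff_weightedHomogeneousComponent, coeff_weightedHomogeneousComponent]
  by_cases h1 : weight (wf G v₀) x.1 = 0
  · rw [if_pos h1, if_pos (by omega)]
  · rw [if_neg h1, zero_mul]
    rcases lt_or_gt_of_ne h1 with h | h
    · have hz : coeff x.1 f = 0 := by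
        by_contra hc
        exact absurd (hf x.1 (MvPolynomial.mem_support_iff.2 hc)) (by omega)
      rw [hz, zero_mul]
    · have hz : coeff x.2 g = 0 := by
        by_contra hc
        exact absurd (hg x.2 (MvPolynomial.mem_support_iff.2 hc)) (by omega)
      rw [hz, mul_zero]

lemma QId_prime : (QId K G v₀).IsPrime := by
  constructor
  · intro h
    have h1 : (1 : RG K G) ∈ QId K G v₀ := h ▸ Submodule.mem_top
    have h2 : (0 : Option (Fin n) →₀ ℕ) ∈ ((1 : RG K G) : Amb K (Fin n)).support := by
      rw [OneMemClass.coe_one, MvPolynomial.mem_support_iff, MvPolynomial.coeff_zero_one]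
      exact one_ne_zero
    have h3 := h1 0 h2
    rw [map_zero] at h3
    exact absurd h3 (lt_irrefl 0)
  · intro x y hxy
    by_contra hcon
    push_neg at hcon
    obtain ⟨hx, hy⟩ := hcon
    rw [mem_QId] at hx hy
    push_neg at hx hy
    obtain ⟨dx, hdx, hdx'⟩ := hx
    obtain ⟨dy, hdy, hdy'⟩ := hy
    have hwx : weight (wf G v₀) dx = 0 :=
      le_antisymm (by omega) (RG_nonneg K G v₀ x.2 dx hdx)
    have hwy : weight (wf G v₀) dy = 0 :=
      le_antisymm (by omega) (RG_nonneg K G v₀ y.2 dy hdy)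
    classical
    set f₀ := weightedHomogeneousComponent (wf G v₀) 0 (x : Amb K (Fin n)) with hf₀
    set g₀ := weightedHomogeneousComponent (wf G v₀) 0 (y : Amb K (Fin n)) with hg₀
    have hf0 : f₀ ≠ 0 := by
      intro h0
      have hco : coeff dx f₀ = coeff dx (x : Amb K (Fin n)) := by
        rw [hf₀, coeff_weightedHomogeneousComponent, if_pos hwx]
      rw [h0, MvPolynomial.coeff_zero] at hco
      exact MvPolynomial.mem_support_iff.1 hdx hco.symm
    have hg0 : g₀ ≠ 0 := by
      intro h0
      have hco : coeff dy g₀ = coeff dy (y : Amb K (Fin n)) := by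
        rw [hg₀, coeff_weightedHomogeneousComponent, if_pos hwy]
      rw [h0, MvPolynomial.coeff_zero] at hco
      exact MvPolynomial.mem_support_iff.1 hdy hco.symm
    have hne : f₀ * g₀ ≠ 0 := mul_ne_zero hf0 hg0
    obtain ⟨e, he⟩ := MvPolynomial.support_nonempty.2 hne
    have hwe : weight (wf G v₀) e = 0 := by
      have h1 := weightedHomogeneousComponent_isWeightedHomogeneous
        (w := wf G v₀) 0 (x : Amb K (Fin n))
      have h2 := weightedHomogeneousComponent_isWeightedHomogeneous
        (w := wf G v₀) 0 (y : Amb K (Fin n))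
      have h3 := h1.mul h2
      have h4 := h3 (MvPolynomial.mem_support_iff.1 he)
      simpa using h4
    have hco : coeff e ((x : Amb K (Fin n)) * (y : Amb K (Fin n))) = coeff e (f₀ * g₀) :=
      coeff_mul_zero K G v₀ _ _ (RG_nonneg K G v₀ x.2) (RG_nonneg K G v₀ y.2) hwe
    have hmem : e ∈ ((x * y : RG K G) : Amb K (Fin n)).support := by
      rw [Subalgebra.coe_mul, MvPolynomial.mem_support_iff, hco]
      exact MvPolynomial.mem_support_iff.1 he
    have h5 := hxy e hmem
    omega

lemma not_mem_Q8 {u : RG K G} {d : Option (Fin n) →₀ ℕ}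
    (h : (u : Amb K (Fin n)) = monomial d (1 : K)) (h0 : weight (wf G v₀) d = 0) :
    u ∉ Q8 K G v₀ := by
  rw [Q8_eq_QId]
  intro hu
  classical
  have hd : d ∈ ((u : Amb K (Fin n))).support := by
    rw [h, MvPolynomial.support_monomial, if_neg (one_ne_zero : (1 : K) ≠ 0)]
    exact Finset.mem_singleton_self d
  have h1 := hu d hd
  omega

lemma cycle_cover {m : ℕ} (hm : 3 ≤ m) (hodd : Odd m) (c : ZMod m → Fin n)
    (hadjc : ∀ p q : ZMod m, G.Adj (c p) (c q) ↔ (q = p + 1 ∨ p = q + 1))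
    (C : Finset (Fin n)) (hC : IsVertexCover G C) :
    ∃ p : ZMod m, c p ∈ C ∧ c (p + 1) ∈ C := by
  by_contra h
  push_neg at h
  have hstep : ∀ p : ZMod m, c (p + 1) ∈ C ↔ c p ∉ C := by
    intro p
    have hedge : G.Adj (c p) (c (p + 1)) := (hadjc p (p + 1)).mpr (Or.inl rfl)
    have h1 := hC hedge
    have h2 := h p
    tauto
  have key : ∀ k : ℕ, ∀ p : ZMod m, (c (p + (k : ZMod m)) ∈ C ↔ (Even k ↔ c p ∈ C)) := by
    intro k
    induction k with
    | zero => intro p; simp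
    | succ k ih =>
      intro p
      have hcast : (p + ((k + 1 : ℕ) : ZMod m)) = (p + (k : ZMod m)) + 1 := by
        push_cast; ring
      rw [hcast, hstep (p + (k : ZMod m)), ih p, Nat.even_add_one]
      tauto
  have hz := key m 0
  rw [ZMod.natCast_self, add_zero] at hz
  have hne : ¬ Even m := Nat.not_even_iff_odd.2 hodd
  tauto

end Stmt8Aux


/-- Let `G` be a connected non-bipartite graph with an induced odd
cycle `G₀` (given by `c`) and a vertex `v₀ ∉ G₀` not adjacent to any vertex of `G₀`.
Then `Q = (t, {x_i t}_{i ≠ v₀}, {x_i x_j t}_{i ∈ N(v₀), j ∈ N(i) \ {v₀}})` is a prime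
ideal of `R_G` containing a minimal prime `P` of `(t)` which is distinct from `P₀`
and from all `P_C`, `C` a minimal vertex cover. -/
theorem stmt8 (K : Type*) [Field K] {n : ℕ} (G : SimpleGraph (Fin n))
    (hconn : G.Connected) (hnb : ¬ G.Colorable 2)
    (m : ℕ) (c : ZMod m → Fin n) (hc : IsInducedOddCycle G m c)
    (v₀ : Fin n) (hv₀ : v₀ ∉ Set.range c) (hadj : ∀ p, ¬ G.Adj v₀ (c p)) :
    (Q8 K G v₀).IsPrime ∧
      ∃ P ∈ (tIdeal K G).minimalPrimes, P ≤ Q8 K G v₀ ∧ P ≠ P0 K G ∧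
        ∀ C : Finset (Fin n), IsMinVertexCover G C → P ≠ PC K G C := by

  classical
  obtain ⟨hm3, hodd, hinj, hiff⟩ := hc
  have hQprime : (Q8 K G v₀).IsPrime := by
    rw [Stmt8Aux.Q8_eq_QId]
    exact Stmt8Aux.QId_prime K G v₀
  refine ⟨hQprime, ?_⟩
  have htle : tIdeal K G ≤ Q8 K G v₀ := by
    rw [tIdeal, Ideal.span_le]
    intro u hu
    exact Ideal.subset_span (Or.inl hu)
  haveI := hQprime
  obtain ⟨P, hP, hPQ⟩ := Ideal.exists_minimalPrimes_le htle
  refine ⟨P, hP, hPQ, ?_, ?_⟩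
  · -- P ≠ P0
    intro hP0
    have hmem : vGen K v₀ ∈ RG K G :=
      Algebra.subset_adjoin (Or.inl (Or.inr ⟨v₀, rfl⟩))
    have hin : (⟨vGen K v₀, hmem⟩ : RG K G) ∈ P0 K G :=
      Ideal.subset_span (Or.inr ⟨v₀, rfl⟩)
    have hq : (⟨vGen K v₀, hmem⟩ : RG K G) ∈ Q8 K G v₀ := hPQ (hP0 ▸ hin)
    refine Stmt8Aux.not_mem_Q8 K G v₀ (Stmt8Aux.vGen_eq K v₀) ?_ hq
    rw [map_add, Stmt8Aux.w_single, Stmt8Aux.w_single, Stmt8Aux.wf_self,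
      Stmt8Aux.wf_none]
    norm_num
  · -- P ≠ PC
    intro C hC hPC
    obtain ⟨p, hp1, hp2⟩ := Stmt8Aux.cycle_cover G hm3 hodd c hiff C hC.1
    have hAdj : G.Adj (c p) (c (p + 1)) := (hiff p (p + 1)).mpr (Or.inl rfl)
    have hmem : eGen K (c p) (c (p + 1)) ∈ RG K G :=
      Algebra.subset_adjoin (Or.inr ⟨c p, c (p + 1), hAdj, rfl⟩)
    have hface : faceMon K ({c p, c (p + 1)} : Finset (Fin n)) = eGen K (c p) (c (p + 1)) := by
      rw [faceMon, eGen, Finset.prod_pair hAdj.ne]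
    have hin : (⟨eGen K (c p) (c (p + 1)), hmem⟩ : RG K G) ∈ PC K G C := by
      refine Ideal.subset_span ⟨{c p, c (p + 1)}, ?_, ?_, hface.symm⟩
      · exact Or.inr (Or.inr ⟨c p, c (p + 1), hAdj, rfl⟩)
      · intro a ha
        rcases Finset.mem_insert.1 ha with rfl | ha
        · exact hp1
        · rw [Finset.mem_singleton] at ha; subst ha; exact hp2
    have hq : (⟨eGen K (c p) (c (p + 1)), hmem⟩ : RG K G) ∈ Q8 K G v₀ := hPQ (hPC ▸ hin)
    have hne1 : c p ≠ v₀ := fun h => hv₀ ⟨p, h⟩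
    have hne2 : c (p + 1) ≠ v₀ := fun h => hv₀ ⟨p + 1, h⟩
    refine Stmt8Aux.not_mem_Q8 K G v₀ (Stmt8Aux.eGen_eq K (c p) (c (p + 1))) ?_ hq
    rw [map_add, map_add, Stmt8Aux.w_single, Stmt8Aux.w_single, Stmt8Aux.w_single,
      Stmt8Aux.wf_none, Stmt8Aux.wf_nonadj G v₀ hne1 (hadj p),
      Stmt8Aux.wf_nonadj G v₀ hne2 (hadj (p + 1))]
    norm_num
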